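/- Let R ≤ M_3(ℂ) be a quantum graph. If R is isomorphic to VT^3_4, then its complement R̄ is isomorphic to VT^3_4. -/

import Mathlib

namespace QG

open Matrix

abbrev Mat (n : ℕ) := Matrix (Fin n) (Fin n) ℂ

/-- `R` is a quantum graph: closed under conjugate transpose and every element is traceless. -/
def IsQuantumGraph {n : ℕ} (R : Submodule ℂ (Mat n)) : Prop :=
  ∀ a ∈ R, aᴴ ∈ R ∧ a.trace = 0

/-- Conjugation `a ↦ u * a * uᴴ` as a linear map. -/
noncomputable def conjMap {n : ℕ} (u : Mat n) : Mat n →ₗ[ℂ] Mat n :=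
  (LinearMap.mulLeft ℂ u).comp (LinearMap.mulRight ℂ uᴴ)

/-- Quantum graphs `R`, `S` are isomorphic if `u R uᴴ = S` for some unitary `u`. -/
def Iso {n : ℕ} (R S : Submodule ℂ (Mat n)) : Prop :=
  ∃ u ∈ Matrix.unitaryGroup (Fin n) ℂ, R.map (conjMap u) = S

/-- The complement of a quantum graph: all traceless matrices orthogonal to `R`. -/
noncomputable def qCompl {n : ℕ} (R : Submodule ℂ (Mat n)) : Submodule ℂ (Mat n) where
  carrier := {a | a.trace = 0 ∧ ∀ b ∈ R, (aᴴ * b).trace = 0}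
  add_mem' := by
    rintro a b ⟨ha1, ha2⟩ ⟨hb1, hb2⟩
    refine ⟨by simp [ha1, hb1], fun c hc => ?_⟩
    simp [Matrix.conjTranspose_add, Matrix.add_mul, ha2 c hc, hb2 c hc]
  zero_mem' := by simp
  smul_mem' := by
    rintro c a ⟨ha1, ha2⟩
    refine ⟨by simp [ha1], fun b hb => ?_⟩
    simp [Matrix.conjTranspose_smul, Matrix.smul_mul, ha2 b hb]

/-- The primitive third root of unity `ω = e^{2πi/3}`. -/
noncomputable def omega3 : ℂ := Complex.exp (2 * (Real.pi : ℂ) * Complex.I / 3)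

/-- The shift matrix `û = e₂₁ + e₃₂ + e₁₃`. -/
def shiftU : Mat 3 := !![0,0,1; 1,0,0; 0,1,0]

/-- The clock matrix `v̂ = diag(1, ω, ω²)`. -/
noncomputable def clockV : Mat 3 := !![1,0,0; 0,omega3,0; 0,0,omega3^2]

/-- `VT34 = ℂû + ℂû² + ℂv̂ + ℂv̂²`. -/
noncomputable def VT34 : Submodule ℂ (Mat 3) :=
  Submodule.span ℂ {shiftU, shiftU ^ 2, clockV, clockV ^ 2}

/-! ### Facts about `omega3` -/

lemma omega3_cube : omega3 ^ 3 = 1 := by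
  rw [omega3, ← Complex.exp_nat_mul]
  rw [show ((3:ℕ):ℂ) * (2*(Real.pi:ℂ)*Complex.I/3) = 2*(Real.pi:ℂ)*Complex.I by push_cast; ring]
  exact Complex.exp_two_pi_mul_I

lemma omega3_ne_zero : omega3 ≠ 0 := Complex.exp_ne_zero _

lemma omega3_ne_one : omega3 ≠ 1 := by
  rw [omega3, Ne, Complex.exp_eq_one_iff]
  rintro ⟨n, hn⟩
  have hpi : (Real.pi : ℂ) ≠ 0 := Complex.ofReal_ne_zero.mpr Real.pi_ne_zero
  field_simp at hn
  have key : (((3*n - 1 : ℤ)) : ℂ) * (2*(Real.pi:ℂ)*Complex.I) = 0 := by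
    push_cast; linear_combination (-(2*(Real.pi:ℂ)*Complex.I)) * hn
  have h0 : ((3*n - 1 : ℤ) : ℂ) = 0 := by
    rcases mul_eq_zero.mp key with h | h
    · exact h
    · exfalso
      have : (2*(Real.pi:ℂ)*Complex.I) ≠ 0 := by
        simp [hpi, Complex.I_ne_zero]
      exact this h
  have : (3*n - 1 : ℤ) = 0 := by exact_mod_cast h0
  omega

lemma omega3_sum : 1 + omega3 + omega3 ^ 2 = 0 := by
  have h := omega3_cube
  have h1 : omega3 - 1 ≠ 0 := sub_ne_zero.mpr omega3_ne_one
  have hz : (omega3 - 1) * (1 + omega3 + omega3 ^ 2) = 0 := by linear_combination h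
  rcases mul_eq_zero.mp hz with h2 | h2
  · exact absurd h2 h1
  · exact h2

lemma conj_omega3 : (starRingEnd ℂ) omega3 = omega3 ^ 2 := by
  have hconj : (starRingEnd ℂ) omega3 * omega3 = 1 := by
    rw [omega3, ← Complex.exp_conj, ← Complex.exp_add]
    rw [show (starRingEnd ℂ) (2*(Real.pi:ℂ)*Complex.I/3) + 2*(Real.pi:ℂ)*Complex.I/3 = 0 by
      simp [map_div₀, _root_.map_mul, Complex.conj_I, Complex.conj_ofReal, map_ofNat]; ring]
    exact Complex.exp_zero
  have h2 : omega3 ^ 2 * omega3 = 1 := by linear_combination omega3_cube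
  exact mul_right_cancel₀ omega3_ne_zero (hconj.trans h2.symm)

/-! ### The complementary generators and the Clifford unitary -/

noncomputable def UVmat : Mat 3 := !![0,0,omega3^2; 1,0,0; 0,omega3,0]
noncomputable def UV2mat : Mat 3 := !![0,0,omega3; 1,0,0; 0,omega3^2,0]
noncomputable def U2Vmat : Mat 3 := !![0,omega3,0; 0,0,omega3^2; 1,0,0]
noncomputable def U2V2mat : Mat 3 := !![0,omega3^2,0; 0,0,omega3; 1,0,0]

noncomputable def S34 : Submodule ℂ (Mat 3) :=
  Submodule.span ℂ {UVmat, UV2mat, U2Vmat, U2V2mat}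

noncomputable def Wmat : Mat 3 := !![1,1,omega3; 1,omega3,1; omega3^2,omega3,omega3]

noncomputable def cW : ℂ := ((Real.sqrt 3 : ℝ) : ℂ)⁻¹

noncomputable def wUnit : Mat 3 := cW • Wmat

lemma conj_cW : (starRingEnd ℂ) cW = cW := by
  rw [cW, map_inv₀, Complex.conj_ofReal]

lemma star_cW : star cW = cW := conj_cW

lemma cW_sq : cW * cW = (3:ℂ)⁻¹ := by
  rw [cW, ← mul_inv]
  congr 1
  rw [← Complex.ofReal_mul, Real.mul_self_sqrt (by norm_num)]
  norm_num

lemma shiftU_sq : shiftU ^ 2 = !![0,1,0; 0,0,1; 1,0,0] := by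
  rw [pow_two]
  ext i j
  fin_cases i <;> fin_cases j <;>
    simp [shiftU, Matrix.mul_apply, Fin.sum_univ_three, Matrix.vecHead, Matrix.vecTail,
      Function.comp]

lemma clockV_sq : clockV ^ 2 = !![1,0,0; 0,omega3^2,0; 0,0,omega3^4] := by
  rw [pow_two]
  ext i j
  fin_cases i <;> fin_cases j <;>
    simp [clockV, Matrix.mul_apply, Fin.sum_univ_three, Matrix.vecHead, Matrix.vecTail,
      Function.comp] <;> ring

/-! ### Matrix computations with `Wmat` -/

lemma Wmat_mul_conjT : Wmat * Wmatᴴ = (3:ℂ) • (1 : Mat 3) := by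
  ext i j
  fin_cases i <;> fin_cases j <;>
    simp [Wmat, Matrix.mul_apply, Matrix.conjTranspose_apply, Fin.sum_univ_three,
      conj_omega3, map_pow, Matrix.one_apply, Matrix.vecHead, Matrix.vecTail, Function.comp]
  all_goals
    first
    | ring1
    | linear_combination ((1:ℂ)*omega3 + (-1:ℂ)) * omega3_sum
    | linear_combination (-1:ℂ) * ((1:ℂ)*omega3 + (-1:ℂ)) * omega3_sum
    | linear_combination (-1:ℂ) * ((1:ℂ)*omega3 + (-1:ℂ)) * omega3_sum
    | linear_combination (-1:ℂ) * (-1:ℂ) * ((1:ℂ)*omega3 + (-1:ℂ)) * omega3_sum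
    | linear_combination ((1:ℂ)) * omega3_sum
    | linear_combination (-1:ℂ) * ((1:ℂ)) * omega3_sum
    | linear_combination (-1:ℂ) * ((1:ℂ)) * omega3_sum
    | linear_combination (-1:ℂ) * (-1:ℂ) * ((1:ℂ)) * omega3_sum
    | linear_combination ((1:ℂ)*omega3^2) * omega3_sum
    | linear_combination (-1:ℂ) * ((1:ℂ)*omega3^2) * omega3_sum
    | linear_combination (-1:ℂ) * ((1:ℂ)*omega3^2) * omega3_sum
    | linear_combination (-1:ℂ) * (-1:ℂ) * ((1:ℂ)*omega3^2) * omega3_sum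
    | linear_combination ((1:ℂ)*omega3) * omega3_sum
    | linear_combination (-1:ℂ) * ((1:ℂ)*omega3) * omega3_sum
    | linear_combination (-1:ℂ) * ((1:ℂ)*omega3) * omega3_sum
    | linear_combination (-1:ℂ) * (-1:ℂ) * ((1:ℂ)*omega3) * omega3_sum
    | linear_combination ((1:ℂ)*omega3^4 + (-1:ℂ)*omega3^3 + (3:ℂ)*omega3 + (-3:ℂ)) * omega3_sum
    | linear_combination (-1:ℂ) * ((1:ℂ)*omega3^4 + (-1:ℂ)*omega3^3 + (3:ℂ)*omega3 + (-3:ℂ)) * omega3_sum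
    | linear_combination (-1:ℂ) * ((1:ℂ)*omega3^4 + (-1:ℂ)*omega3^3 + (3:ℂ)*omega3 + (-3:ℂ)) * omega3_sum
    | linear_combination (-1:ℂ) * (-1:ℂ) * ((1:ℂ)*omega3^4 + (-1:ℂ)*omega3^3 + (3:ℂ)*omega3 + (-3:ℂ)) * omega3_sum
    | linear_combination ((3:ℂ)*omega3^3 + (-3:ℂ)*omega3^2) * omega3_sum
    | linear_combination ((3:ℂ)*omega3^2 + (-3:ℂ)*omega3^3) * omega3_sum

lemma wUnit_mem : wUnit ∈ Matrix.unitaryGroup (Fin 3) ℂ := by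
  rw [Matrix.mem_unitaryGroup_iff, Matrix.star_eq_conjTranspose, wUnit,
    Matrix.conjTranspose_smul, Matrix.smul_mul, Matrix.mul_smul, Wmat_mul_conjT]
  rw [smul_smul, smul_smul, star_cW, cW_sq]
  rw [show (3:ℂ)⁻¹ * 3 = 1 by norm_num, one_smul]

lemma W_UV : Wmat * UVmat * Wmatᴴ = (3 * omega3) • shiftU := by
  ext i j
  fin_cases i <;> fin_cases j <;>
    simp [Wmat, UVmat, shiftU, Matrix.mul_apply, Matrix.conjTranspose_apply, Fin.sum_univ_three,
      conj_omega3, map_pow, Matrix.vecHead, Matrix.vecTail, Function.comp]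
  all_goals
    first
    | ring1
    | linear_combination ((1:ℂ)*omega3^2 + (-1:ℂ)*omega3 + (1:ℂ)) * omega3_sum
    | linear_combination (-1:ℂ) * ((1:ℂ)*omega3^2 + (-1:ℂ)*omega3 + (1:ℂ)) * omega3_sum
    | linear_combination (-1:ℂ) * ((1:ℂ)*omega3^2 + (-1:ℂ)*omega3 + (1:ℂ)) * omega3_sum
    | linear_combination (-1:ℂ) * (-1:ℂ) * ((1:ℂ)*omega3^2 + (-1:ℂ)*omega3 + (1:ℂ)) * omega3_sum
    | linear_combination ((3:ℂ)*omega3^2 + (-3:ℂ)*omega3) * omega3_sum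
    | linear_combination (-1:ℂ) * ((3:ℂ)*omega3^2 + (-3:ℂ)*omega3) * omega3_sum
    | linear_combination (-1:ℂ) * ((3:ℂ)*omega3^2 + (-3:ℂ)*omega3) * omega3_sum
    | linear_combination (-1:ℂ) * (-1:ℂ) * ((3:ℂ)*omega3^2 + (-3:ℂ)*omega3) * omega3_sum
    | linear_combination ((1:ℂ)*omega3^2 + (-1:ℂ)*omega3) * omega3_sum
    | linear_combination (-1:ℂ) * ((1:ℂ)*omega3^2 + (-1:ℂ)*omega3) * omega3_sum
    | linear_combination (-1:ℂ) * ((1:ℂ)*omega3^2 + (-1:ℂ)*omega3) * omega3_sum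
    | linear_combination (-1:ℂ) * (-1:ℂ) * ((1:ℂ)*omega3^2 + (-1:ℂ)*omega3) * omega3_sum
    | linear_combination ((1:ℂ)*omega3) * omega3_sum
    | linear_combination (-1:ℂ) * ((1:ℂ)*omega3) * omega3_sum
    | linear_combination (-1:ℂ) * ((1:ℂ)*omega3) * omega3_sum
    | linear_combination (-1:ℂ) * (-1:ℂ) * ((1:ℂ)*omega3) * omega3_sum
    | linear_combination ((1:ℂ)*omega3^3) * omega3_sum
    | linear_combination (-1:ℂ) * ((1:ℂ)*omega3^3) * omega3_sum
    | linear_combination (-1:ℂ) * ((1:ℂ)*omega3^3) * omega3_sum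
    | linear_combination (-1:ℂ) * (-1:ℂ) * ((1:ℂ)*omega3^3) * omega3_sum
    | linear_combination ((1:ℂ)*omega3^4 + (-1:ℂ)*omega3^3 + (1:ℂ)*omega3) * omega3_sum
    | linear_combination (-1:ℂ) * ((1:ℂ)*omega3^4 + (-1:ℂ)*omega3^3 + (1:ℂ)*omega3) * omega3_sum
    | linear_combination (-1:ℂ) * ((1:ℂ)*omega3^4 + (-1:ℂ)*omega3^3 + (1:ℂ)*omega3) * omega3_sum
    | linear_combination (-1:ℂ) * (-1:ℂ) * ((1:ℂ)*omega3^4 + (-1:ℂ)*omega3^3 + (1:ℂ)*omega3) * omega3_sum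
    | linear_combination ((2:ℂ)*omega3^2 + (-2:ℂ)*omega3) * omega3_sum
    | linear_combination (-1:ℂ) * ((2:ℂ)*omega3^2 + (-2:ℂ)*omega3) * omega3_sum
    | linear_combination (-1:ℂ) * ((2:ℂ)*omega3^2 + (-2:ℂ)*omega3) * omega3_sum
    | linear_combination (-1:ℂ) * (-1:ℂ) * ((2:ℂ)*omega3^2 + (-2:ℂ)*omega3) * omega3_sum
    | linear_combination ((1:ℂ)*omega3^4) * omega3_sum
    | linear_combination (-1:ℂ) * ((1:ℂ)*omega3^4) * omega3_sum
    | linear_combination (-1:ℂ) * ((1:ℂ)*omega3^4) * omega3_sum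
    | linear_combination (-1:ℂ) * (-1:ℂ) * ((1:ℂ)*omega3^4) * omega3_sum
    | linear_combination ((3:ℂ)*omega3^3 + (-3:ℂ)*omega3^2) * omega3_sum
    | linear_combination ((3:ℂ)*omega3^2 + (-3:ℂ)*omega3^3) * omega3_sum

lemma W_UV2 : Wmat * UV2mat * Wmatᴴ = (3:ℂ) • clockV := by
  ext i j
  fin_cases i <;> fin_cases j <;>
    simp [Wmat, UV2mat, clockV, Matrix.mul_apply, Matrix.conjTranspose_apply, Fin.sum_univ_three,
      conj_omega3, map_pow, Matrix.vecHead, Matrix.vecTail, Function.comp]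
  all_goals
    first
    | ring1
    | linear_combination ((2:ℂ)*omega3 + (-2:ℂ)) * omega3_sum
    | linear_combination (-1:ℂ) * ((2:ℂ)*omega3 + (-2:ℂ)) * omega3_sum
    | linear_combination (-1:ℂ) * ((2:ℂ)*omega3 + (-2:ℂ)) * omega3_sum
    | linear_combination (-1:ℂ) * (-1:ℂ) * ((2:ℂ)*omega3 + (-2:ℂ)) * omega3_sum
    | linear_combination ((1:ℂ)*omega3^3 + (-1:ℂ)*omega3^2 + (1:ℂ)) * omega3_sum
    | linear_combination (-1:ℂ) * ((1:ℂ)*omega3^3 + (-1:ℂ)*omega3^2 + (1:ℂ)) * omega3_sum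
    | linear_combination (-1:ℂ) * ((1:ℂ)*omega3^3 + (-1:ℂ)*omega3^2 + (1:ℂ)) * omega3_sum
    | linear_combination (-1:ℂ) * (-1:ℂ) * ((1:ℂ)*omega3^3 + (-1:ℂ)*omega3^2 + (1:ℂ)) * omega3_sum
    | linear_combination ((1:ℂ)*omega3^3) * omega3_sum
    | linear_combination (-1:ℂ) * ((1:ℂ)*omega3^3) * omega3_sum
    | linear_combination (-1:ℂ) * ((1:ℂ)*omega3^3) * omega3_sum
    | linear_combination (-1:ℂ) * (-1:ℂ) * ((1:ℂ)*omega3^3) * omega3_sum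
    | linear_combination ((1:ℂ)*omega3) * omega3_sum
    | linear_combination (-1:ℂ) * ((1:ℂ)*omega3) * omega3_sum
    | linear_combination (-1:ℂ) * ((1:ℂ)*omega3) * omega3_sum
    | linear_combination (-1:ℂ) * (-1:ℂ) * ((1:ℂ)*omega3) * omega3_sum
    | linear_combination ((1:ℂ)*omega3^2 + (-1:ℂ)*omega3) * omega3_sum
    | linear_combination (-1:ℂ) * ((1:ℂ)*omega3^2 + (-1:ℂ)*omega3) * omega3_sum
    | linear_combination (-1:ℂ) * ((1:ℂ)*omega3^2 + (-1:ℂ)*omega3) * omega3_sum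
    | linear_combination (-1:ℂ) * (-1:ℂ) * ((1:ℂ)*omega3^2 + (-1:ℂ)*omega3) * omega3_sum
    | linear_combination ((1:ℂ)*omega3^3 + (-1:ℂ)*omega3^2 + (1:ℂ)*omega3) * omega3_sum
    | linear_combination (-1:ℂ) * ((1:ℂ)*omega3^3 + (-1:ℂ)*omega3^2 + (1:ℂ)*omega3) * omega3_sum
    | linear_combination (-1:ℂ) * ((1:ℂ)*omega3^3 + (-1:ℂ)*omega3^2 + (1:ℂ)*omega3) * omega3_sum
    | linear_combination (-1:ℂ) * (-1:ℂ) * ((1:ℂ)*omega3^3 + (-1:ℂ)*omega3^2 + (1:ℂ)*omega3) * omega3_sum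
    | linear_combination ((3:ℂ)*omega3^3 + (-3:ℂ)*omega3^2) * omega3_sum
    | linear_combination (-1:ℂ) * ((3:ℂ)*omega3^3 + (-3:ℂ)*omega3^2) * omega3_sum
    | linear_combination ((3:ℂ)*omega3^2 + (-3:ℂ)*omega3^3) * omega3_sum
    | linear_combination (-1:ℂ) * ((3:ℂ)*omega3^2 + (-3:ℂ)*omega3^3) * omega3_sum

lemma W_U2V : Wmat * U2Vmat * Wmatᴴ = (3 * omega3) • (clockV ^ 2) := by
  rw [clockV_sq]
  ext i j
  fin_cases i <;> fin_cases j <;>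
    simp [Wmat, U2Vmat, Matrix.mul_apply, Matrix.conjTranspose_apply, Fin.sum_univ_three,
      conj_omega3, map_pow, Matrix.vecHead, Matrix.vecTail, Function.comp]
  all_goals
    first
    | ring1
    | linear_combination ((1:ℂ)*omega3^2 + (-1:ℂ)*omega3) * omega3_sum
    | linear_combination (-1:ℂ) * ((1:ℂ)*omega3^2 + (-1:ℂ)*omega3) * omega3_sum
    | linear_combination (-1:ℂ) * ((1:ℂ)*omega3^2 + (-1:ℂ)*omega3) * omega3_sum
    | linear_combination (-1:ℂ) * (-1:ℂ) * ((1:ℂ)*omega3^2 + (-1:ℂ)*omega3) * omega3_sum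
    | linear_combination ((1:ℂ)*omega3) * omega3_sum
    | linear_combination (-1:ℂ) * ((1:ℂ)*omega3) * omega3_sum
    | linear_combination (-1:ℂ) * ((1:ℂ)*omega3) * omega3_sum
    | linear_combination (-1:ℂ) * (-1:ℂ) * ((1:ℂ)*omega3) * omega3_sum
    | linear_combination ((1:ℂ)*omega3^3) * omega3_sum
    | linear_combination (-1:ℂ) * ((1:ℂ)*omega3^3) * omega3_sum
    | linear_combination (-1:ℂ) * ((1:ℂ)*omega3^3) * omega3_sum
    | linear_combination (-1:ℂ) * (-1:ℂ) * ((1:ℂ)*omega3^3) * omega3_sum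
    | linear_combination ((1:ℂ)*omega3^3 + (-1:ℂ)*omega3^2 + (1:ℂ)) * omega3_sum
    | linear_combination (-1:ℂ) * ((1:ℂ)*omega3^3 + (-1:ℂ)*omega3^2 + (1:ℂ)) * omega3_sum
    | linear_combination (-1:ℂ) * ((1:ℂ)*omega3^3 + (-1:ℂ)*omega3^2 + (1:ℂ)) * omega3_sum
    | linear_combination (-1:ℂ) * (-1:ℂ) * ((1:ℂ)*omega3^3 + (-1:ℂ)*omega3^2 + (1:ℂ)) * omega3_sum
    | linear_combination ((-1:ℂ)*omega3 + (1:ℂ)) * omega3_sum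
    | linear_combination (-1:ℂ) * ((-1:ℂ)*omega3 + (1:ℂ)) * omega3_sum
    | linear_combination (-1:ℂ) * ((-1:ℂ)*omega3 + (1:ℂ)) * omega3_sum
    | linear_combination (-1:ℂ) * (-1:ℂ) * ((-1:ℂ)*omega3 + (1:ℂ)) * omega3_sum
    | linear_combination ((1:ℂ)*omega3^3 + (-1:ℂ)*omega3^2 + (1:ℂ)*omega3) * omega3_sum
    | linear_combination (-1:ℂ) * ((1:ℂ)*omega3^3 + (-1:ℂ)*omega3^2 + (1:ℂ)*omega3) * omega3_sum
    | linear_combination (-1:ℂ) * ((1:ℂ)*omega3^3 + (-1:ℂ)*omega3^2 + (1:ℂ)*omega3) * omega3_sum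
    | linear_combination (-1:ℂ) * (-1:ℂ) * ((1:ℂ)*omega3^3 + (-1:ℂ)*omega3^2 + (1:ℂ)*omega3) * omega3_sum
    | linear_combination ((3:ℂ)*omega3^3 + (-3:ℂ)*omega3^2) * omega3_sum
    | linear_combination (-1:ℂ) * ((3:ℂ)*omega3^3 + (-3:ℂ)*omega3^2) * omega3_sum
    | linear_combination ((3:ℂ)*omega3^2 + (-3:ℂ)*omega3^3) * omega3_sum
    | linear_combination (-1:ℂ) * ((3:ℂ)*omega3^2 + (-3:ℂ)*omega3^3) * omega3_sum

lemma W_U2V2 : Wmat * U2V2mat * Wmatᴴ = (3 * omega3) • (shiftU ^ 2) := by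
  rw [shiftU_sq]
  ext i j
  fin_cases i <;> fin_cases j <;>
    simp [Wmat, U2V2mat, Matrix.mul_apply, Matrix.conjTranspose_apply, Fin.sum_univ_three,
      conj_omega3, map_pow, Matrix.vecHead, Matrix.vecTail, Function.comp]
  all_goals
    first
    | ring1
    | linear_combination ((1:ℂ)*omega3) * omega3_sum
    | linear_combination (-1:ℂ) * ((1:ℂ)*omega3) * omega3_sum
    | linear_combination (-1:ℂ) * ((1:ℂ)*omega3) * omega3_sum
    | linear_combination (-1:ℂ) * (-1:ℂ) * ((1:ℂ)*omega3) * omega3_sum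
    | linear_combination ((1:ℂ)*omega3^2 + (-1:ℂ)*omega3) * omega3_sum
    | linear_combination (-1:ℂ) * ((1:ℂ)*omega3^2 + (-1:ℂ)*omega3) * omega3_sum
    | linear_combination (-1:ℂ) * ((1:ℂ)*omega3^2 + (-1:ℂ)*omega3) * omega3_sum
    | linear_combination (-1:ℂ) * (-1:ℂ) * ((1:ℂ)*omega3^2 + (-1:ℂ)*omega3) * omega3_sum
    | linear_combination ((1:ℂ)*omega3^3) * omega3_sum
    | linear_combination (-1:ℂ) * ((1:ℂ)*omega3^3) * omega3_sum
    | linear_combination (-1:ℂ) * ((1:ℂ)*omega3^3) * omega3_sum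
    | linear_combination (-1:ℂ) * (-1:ℂ) * ((1:ℂ)*omega3^3) * omega3_sum
    | linear_combination ((1:ℂ)*omega3^2 + (-1:ℂ)*omega3 + (1:ℂ)) * omega3_sum
    | linear_combination (-1:ℂ) * ((1:ℂ)*omega3^2 + (-1:ℂ)*omega3 + (1:ℂ)) * omega3_sum
    | linear_combination (-1:ℂ) * ((1:ℂ)*omega3^2 + (-1:ℂ)*omega3 + (1:ℂ)) * omega3_sum
    | linear_combination (-1:ℂ) * (-1:ℂ) * ((1:ℂ)*omega3^2 + (-1:ℂ)*omega3 + (1:ℂ)) * omega3_sum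
    | linear_combination ((3:ℂ)*omega3^2 + (-3:ℂ)*omega3) * omega3_sum
    | linear_combination (-1:ℂ) * ((3:ℂ)*omega3^2 + (-3:ℂ)*omega3) * omega3_sum
    | linear_combination (-1:ℂ) * ((3:ℂ)*omega3^2 + (-3:ℂ)*omega3) * omega3_sum
    | linear_combination (-1:ℂ) * (-1:ℂ) * ((3:ℂ)*omega3^2 + (-3:ℂ)*omega3) * omega3_sum
    | linear_combination ((2:ℂ)*omega3^2 + (-2:ℂ)*omega3) * omega3_sum
    | linear_combination (-1:ℂ) * ((2:ℂ)*omega3^2 + (-2:ℂ)*omega3) * omega3_sum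
    | linear_combination (-1:ℂ) * ((2:ℂ)*omega3^2 + (-2:ℂ)*omega3) * omega3_sum
    | linear_combination (-1:ℂ) * (-1:ℂ) * ((2:ℂ)*omega3^2 + (-2:ℂ)*omega3) * omega3_sum
    | linear_combination ((1:ℂ)*omega3^4 + (-1:ℂ)*omega3^3 + (1:ℂ)*omega3) * omega3_sum
    | linear_combination (-1:ℂ) * ((1:ℂ)*omega3^4 + (-1:ℂ)*omega3^3 + (1:ℂ)*omega3) * omega3_sum
    | linear_combination (-1:ℂ) * ((1:ℂ)*omega3^4 + (-1:ℂ)*omega3^3 + (1:ℂ)*omega3) * omega3_sum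
    | linear_combination (-1:ℂ) * (-1:ℂ) * ((1:ℂ)*omega3^4 + (-1:ℂ)*omega3^3 + (1:ℂ)*omega3) * omega3_sum
    | linear_combination ((1:ℂ)*omega3^4) * omega3_sum
    | linear_combination (-1:ℂ) * ((1:ℂ)*omega3^4) * omega3_sum
    | linear_combination (-1:ℂ) * ((1:ℂ)*omega3^4) * omega3_sum
    | linear_combination (-1:ℂ) * (-1:ℂ) * ((1:ℂ)*omega3^4) * omega3_sum
    | linear_combination ((3:ℂ)*omega3^3 + (-3:ℂ)*omega3^2) * omega3_sum
    | linear_combination ((3:ℂ)*omega3^2 + (-3:ℂ)*omega3^3) * omega3_sum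

lemma conjMap_apply {n : ℕ} (u a : Mat n) : conjMap u a = u * a * uᴴ := by
  simp [conjMap, Matrix.mul_assoc]

lemma map_map_conjMap {n : ℕ} (u w : Mat n) (X : Submodule ℂ (Mat n)) :
    (X.map (conjMap u)).map (conjMap w) = X.map (conjMap (w * u)) := by
  rw [← Submodule.map_comp]
  congr 1
  ext a
  simp [conjMap_apply, Matrix.conjTranspose_mul, Matrix.mul_assoc]

lemma trace_conj {n : ℕ} {u : Mat n} (h : uᴴ * u = 1) (a : Mat n) :
    (u * a * uᴴ).trace = a.trace := by
  rw [Matrix.trace_mul_comm, ← Matrix.mul_assoc, h, Matrix.one_mul]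

lemma trace_conj_pair {n : ℕ} {u : Mat n} (h : uᴴ * u = 1) (a b : Mat n) :
    ((u * a * uᴴ)ᴴ * (u * b * uᴴ)).trace = (aᴴ * b).trace := by
  have : (u * a * uᴴ)ᴴ * (u * b * uᴴ) = u * (aᴴ * b) * uᴴ := by
    simp only [Matrix.conjTranspose_mul, Matrix.conjTranspose_conjTranspose, Matrix.mul_assoc]
    rw [← Matrix.mul_assoc uᴴ u, h, Matrix.one_mul]
  rw [this, trace_conj h]

lemma mem_qCompl {n : ℕ} {R : Submodule ℂ (Mat n)} {a : Mat n} :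
    a ∈ qCompl R ↔ a.trace = 0 ∧ ∀ b ∈ R, (aᴴ * b).trace = 0 := Iff.rfl

lemma qCompl_map {n : ℕ} {u : Mat n} (hu : u ∈ Matrix.unitaryGroup (Fin n) ℂ)
    (R : Submodule ℂ (Mat n)) :
    (qCompl R).map (conjMap u) = qCompl (R.map (conjMap u)) := by
  have h1 : uᴴ * u = 1 := by
    have := hu.1
    rwa [Matrix.star_eq_conjTranspose] at this
  have h2 : u * uᴴ = 1 := by
    have := hu.2
    rwa [Matrix.star_eq_conjTranspose] at this
  apply le_antisymm
  · rintro _ ⟨a, ha, rfl⟩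
    rw [conjMap_apply]
    refine ⟨by rw [trace_conj h1]; exact ha.1, ?_⟩
    rintro _ ⟨b, hb, rfl⟩
    rw [conjMap_apply, trace_conj_pair h1]
    exact ha.2 b hb
  · intro a ha
    have h2' : uᴴᴴ * uᴴ = 1 := by rw [Matrix.conjTranspose_conjTranspose]; exact h2
    refine ⟨uᴴ * a * u, ⟨?_, ?_⟩, ?_⟩
    · have key := trace_conj (u := uᴴ) h2' a
      rw [Matrix.conjTranspose_conjTranspose] at key
      rw [key]
      exact ha.1
    · intro b hb
      have hmem : u * b * uᴴ ∈ R.map (conjMap u) := ⟨b, hb, by rw [conjMap_apply]⟩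
      have h0 := ha.2 _ hmem
      have key := trace_conj_pair (u := uᴴ) h2' a (u * b * uᴴ)
      rw [Matrix.conjTranspose_conjTranspose] at key
      have e1 : uᴴ * (u * b * uᴴ) * u = b := by
        calc uᴴ * (u * b * uᴴ) * u = uᴴ * u * b * (uᴴ * u) := by simp only [Matrix.mul_assoc]
          _ = b := by rw [h1, Matrix.one_mul, Matrix.mul_one]
      rw [e1] at key
      exact key.trans h0
    · rw [conjMap_apply]
      calc u * (uᴴ * a * u) * uᴴ = (u * uᴴ) * a * (u * uᴴ) := by
            simp only [Matrix.mul_assoc]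
        _ = a := by rw [h2, Matrix.one_mul, Matrix.mul_one]

/-! ### `qCompl VT34 = S34` -/

lemma VT34_eq : VT34 = Submodule.span ℂ
    {shiftU, !![0,1,0; 0,0,1; 1,0,0], clockV, !![1,0,0; 0,omega3^2,0; 0,0,omega3^4]} := by
  rw [VT34, shiftU_sq, clockV_sq]

lemma S34_le_qCompl : S34 ≤ qCompl VT34 := by
  rw [S34, Submodule.span_le]
  intro g hg
  have htr : ∀ x ∈ ({UVmat, UV2mat, U2Vmat, U2V2mat} : Set (Mat 3)), x.trace = 0 := by
    rintro x (rfl | rfl | rfl | rfl) <;>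
      simp [UVmat, UV2mat, U2Vmat, U2V2mat, Matrix.trace_fin_three,
        Matrix.vecHead, Matrix.vecTail, Function.comp]
  refine ⟨htr g hg, ?_⟩
  intro b hb
  rw [VT34_eq] at hb
  induction hb using Submodule.span_induction with
  | mem x hx =>
    clear htr
    rcases hg with rfl | rfl | rfl | rfl <;>
      rcases hx with rfl | rfl | rfl | rfl <;>
      rw [Matrix.trace_fin_three] <;>
      simp [UVmat, UV2mat, U2Vmat, U2V2mat, shiftU, clockV, Matrix.mul_apply,
        Fin.sum_univ_three, Matrix.conjTranspose_apply, conj_omega3, map_pow,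
        Matrix.vecHead, Matrix.vecTail, Function.comp] <;>
      first
        | linear_combination ((1:ℂ)*omega3^2 + (-1:ℂ)*omega3 + (1:ℂ)) * omega3_sum
        | linear_combination ((-1:ℂ)*omega3^2 + (1:ℂ)*omega3 + (-1:ℂ)) * omega3_sum
        | ring1
  | zero => simp
  | add x y hx hy ihx ihy => rw [Matrix.mul_add, Matrix.trace_add, ihx, ihy, add_zero]
  | smul c x hx ihx => rw [Matrix.mul_smul, Matrix.trace_smul, ihx, smul_zero]

set_option maxHeartbeats 1000000 in
lemma qCompl_le_S34 : qCompl VT34 ≤ S34 := by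
  rintro a ⟨htr, horth⟩
  have hU : shiftU ∈ VT34 := Submodule.subset_span (Set.mem_insert _ _)
  have hU2 : shiftU ^ 2 ∈ VT34 :=
    Submodule.subset_span (Set.mem_insert_iff.mpr (Or.inr (Set.mem_insert _ _)))
  have hV : clockV ∈ VT34 :=
    Submodule.subset_span (Set.mem_insert_iff.mpr (Or.inr
      (Set.mem_insert_iff.mpr (Or.inr (Set.mem_insert _ _)))))
  have hV2 : clockV ^ 2 ∈ VT34 :=
    Submodule.subset_span (Set.mem_insert_iff.mpr (Or.inr
      (Set.mem_insert_iff.mpr (Or.inr (Set.mem_insert_iff.mpr (Or.inr rfl))))))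
  have E0 : a 0 0 + a 1 1 + a 2 2 = 0 := by
    have := htr; rwa [Matrix.trace_fin_three] at this
  have h1 := horth shiftU hU
  have h2 := horth _ hU2
  have h3 := horth clockV hV
  have h4 := horth _ hV2
  rw [shiftU_sq] at h2
  rw [clockV_sq] at h4
  rw [Matrix.trace_fin_three] at h1 h2 h3 h4
  simp [shiftU, clockV, Matrix.mul_apply, Fin.sum_univ_three, Matrix.conjTranspose_apply,
    Matrix.vecHead, Matrix.vecTail, Function.comp, Complex.star_def] at h1 h2 h3 h4
  have E1 : a 0 2 + a 1 0 + a 2 1 = 0 := by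
    have h := congrArg (starRingEnd ℂ) h1
    simp only [map_add, _root_.map_mul, Complex.conj_conj, conj_omega3, map_pow, map_zero,
      _root_.map_one] at h
    first
    | linear_combination h
    | linear_combination (-1:ℂ) * h
  have E2 : a 0 1 + a 1 2 + a 2 0 = 0 := by
    have h := congrArg (starRingEnd ℂ) h2
    simp only [map_add, _root_.map_mul, Complex.conj_conj, conj_omega3, map_pow, map_zero,
      _root_.map_one] at h
    first
    | linear_combination h
    | linear_combination (-1:ℂ) * h
  have E3 : a 0 0 + omega3^2 * a 1 1 + omega3^4 * a 2 2 = 0 := by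
    have h := congrArg (starRingEnd ℂ) h3
    simp only [map_add, _root_.map_mul, Complex.conj_conj, conj_omega3, map_pow, map_zero,
      _root_.map_one] at h
    first
    | linear_combination h
    | linear_combination (-1:ℂ) * h
  have E4 : a 0 0 + omega3^4 * a 1 1 + omega3^8 * a 2 2 = 0 := by
    have h := congrArg (starRingEnd ℂ) h4
    simp only [map_add, _root_.map_mul, Complex.conj_conj, conj_omega3, map_pow, map_zero,
      _root_.map_one] at h
    first
    | linear_combination h
    | linear_combination (-1:ℂ) * h
  have key : ∀ (x00 x01 x02 x10 x11 x12 x20 x21 x22 : ℂ),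
      x00 + x11 + x22 = 0 →
      x02 + x10 + x21 = 0 →
      x01 + x12 + x20 = 0 →
      x00 + omega3^2 * x11 + omega3^4 * x22 = 0 →
      x00 + omega3^4 * x11 + omega3^8 * x22 = 0 →
      !![x00, x01, x02; x10, x11, x12; x20, x21, x22] =
        ((x10 + omega3^2 * x21 + omega3 * x02)/3) • UVmat
        + ((x10 + omega3 * x21 + omega3^2 * x02)/3) • UV2mat
        + ((x20 + omega3^2 * x01 + omega3 * x12)/3) • U2Vmat
        + ((x20 + omega3 * x01 + omega3^2 * x12)/3) • U2V2mat := by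
    intro x00 x01 x02 x10 x11 x12 x20 x21 x22 E0 E1 E2 E3 E4
    ext i j
    fin_cases i <;> fin_cases j <;>
      simp [UVmat, UV2mat, U2Vmat, U2V2mat, Matrix.vecHead, Matrix.vecTail, Function.comp]
    · linear_combination ((1/3:ℂ)) * E0 + ((1/3:ℂ)) * E3 + ((1/3:ℂ)) * E4 + ((-1/3:ℂ)*omega3^2 + (1/3:ℂ)*omega3 + (-1/3:ℂ)) * x11 * omega3_sum + ((-1/3:ℂ)*omega3^6 + (1/3:ℂ)*omega3^5 + (-1/3:ℂ)*omega3^3 + (1/3:ℂ)*omega3 + (-1/3:ℂ)) * x22 * omega3_sum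
    · linear_combination ((-1/3:ℂ)*omega3^2 + (-1/3:ℂ)*omega3) * E2 + ((-2/3:ℂ)*omega3 + (1:ℂ)) * x01 * omega3_sum + ((-1/3:ℂ)*omega3^2 + (1/3:ℂ)*omega3) * x12 * omega3_sum
    · linear_combination ((-1/3:ℂ)*omega3^2 + (-1/3:ℂ)*omega3) * E1 + ((-2/3:ℂ)*omega3 + (1:ℂ)) * x02 * omega3_sum + ((-1/3:ℂ)*omega3^2 + (1/3:ℂ)*omega3) * x21 * omega3_sum
    · linear_combination ((1/3:ℂ)) * E1 + ((-1/3:ℂ)) * x21 * omega3_sum + ((-1/3:ℂ)) * x02 * omega3_sum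
    · linear_combination ((1/3:ℂ)) * E0 + ((1/3:ℂ)*omega3) * E3 + ((1/3:ℂ)*omega3^2) * E4 + ((-1/3:ℂ)*omega3^4 + (1/3:ℂ)*omega3^3 + (-2/3:ℂ)*omega3 + (2/3:ℂ)) * x11 * omega3_sum + ((-1/3:ℂ)) * x00 * omega3_sum + ((-1/3:ℂ)*omega3^8 + (1/3:ℂ)*omega3^7 + (-1/3:ℂ)*omega3^5 + (1/3:ℂ)*omega3^4 + (-1/3:ℂ)*omega3^3 + (1/3:ℂ)*omega3 + (-1/3:ℂ)) * x22 * omega3_sum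
    · linear_combination ((-1/3:ℂ)*omega3^2 + (-1/3:ℂ)*omega3) * E2 + ((-2/3:ℂ)*omega3 + (1:ℂ)) * x12 * omega3_sum + ((-1/3:ℂ)*omega3^2 + (1/3:ℂ)*omega3) * x01 * omega3_sum
    · linear_combination ((1/3:ℂ)) * E2 + ((-1/3:ℂ)) * x01 * omega3_sum + ((-1/3:ℂ)) * x12 * omega3_sum
    · linear_combination ((-1/3:ℂ)*omega3^2 + (-1/3:ℂ)*omega3) * E1 + ((-2/3:ℂ)*omega3 + (1:ℂ)) * x21 * omega3_sum + ((-1/3:ℂ)*omega3^2 + (1/3:ℂ)*omega3) * x02 * omega3_sum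
    · linear_combination ((1/3:ℂ)) * E0 + ((1/3:ℂ)*omega3^2) * E3 + ((1/3:ℂ)*omega3^4) * E4 + ((-1/3:ℂ)*omega3^10 + (1/3:ℂ)*omega3^9 + (-1/3:ℂ)*omega3^7 + (1/3:ℂ)*omega3^6 + (-2/3:ℂ)*omega3^4 + (2/3:ℂ)*omega3^3 + (-2/3:ℂ)*omega3 + (2/3:ℂ)) * x22 * omega3_sum + ((-1/3:ℂ)*omega3^2 + (1/3:ℂ)*omega3 + (-1/3:ℂ)) * x00 * omega3_sum + ((-1/3:ℂ)*omega3^6 + (1/3:ℂ)*omega3^5 + (-1/3:ℂ)*omega3^3 + (1/3:ℂ)*omega3 + (-1/3:ℂ)) * x11 * omega3_sum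
  have hdecomp := (Matrix.eta_fin_three a).trans
    (key (a 0 0) (a 0 1) (a 0 2) (a 1 0) (a 1 1) (a 1 2) (a 2 0) (a 2 1) (a 2 2)
      E0 E1 E2 E3 E4)
  rw [hdecomp]
  have m1 : UVmat ∈ S34 := Submodule.subset_span (Set.mem_insert _ _)
  have m2 : UV2mat ∈ S34 :=
    Submodule.subset_span (Set.mem_insert_iff.mpr (Or.inr (Set.mem_insert _ _)))
  have m3 : U2Vmat ∈ S34 :=
    Submodule.subset_span (Set.mem_insert_iff.mpr (Or.inr
      (Set.mem_insert_iff.mpr (Or.inr (Set.mem_insert _ _)))))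
  have m4 : U2V2mat ∈ S34 :=
    Submodule.subset_span (Set.mem_insert_iff.mpr (Or.inr
      (Set.mem_insert_iff.mpr (Or.inr (Set.mem_insert_iff.mpr (Or.inr rfl))))))
  exact Submodule.add_mem _ (Submodule.add_mem _ (Submodule.add_mem _
    (Submodule.smul_mem _ _ m1) (Submodule.smul_mem _ _ m2)) (Submodule.smul_mem _ _ m3))
    (Submodule.smul_mem _ _ m4)

lemma qCompl_VT34 : qCompl VT34 = S34 :=
  le_antisymm qCompl_le_S34 S34_le_qCompl

/-! ### `S34` maps onto `VT34` under conjugation by `wUnit` -/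

lemma conjMap_wUnit (g t : Mat 3) (c : ℂ) (h : Wmat * g * Wmatᴴ = (3 * c) • t) :
    conjMap wUnit g = c • t := by
  rw [conjMap_apply, wUnit, Matrix.conjTranspose_smul, star_cW, Matrix.smul_mul,
    Matrix.smul_mul, Matrix.mul_smul, smul_smul, h, smul_smul, cW_sq]
  congr 1
  field_simp

lemma S34_map_wUnit : S34.map (conjMap wUnit) = VT34 := by
  rw [S34, Submodule.map_span]
  have himg : conjMap wUnit '' {UVmat, UV2mat, U2Vmat, U2V2mat} =
      {omega3 • shiftU, (1:ℂ) • clockV, omega3 • (clockV ^ 2), omega3 • (shiftU ^ 2)} := by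
    rw [Set.image_insert_eq, Set.image_insert_eq, Set.image_insert_eq, Set.image_singleton]
    rw [conjMap_wUnit UVmat shiftU omega3 W_UV,
      conjMap_wUnit UV2mat clockV 1 (by rw [W_UV2]; norm_num),
      conjMap_wUnit U2Vmat (clockV ^ 2) omega3 W_U2V,
      conjMap_wUnit U2V2mat (shiftU ^ 2) omega3 W_U2V2]
  rw [himg, VT34]
  have hsm : ∀ (x : Mat 3), Submodule.span ℂ {omega3 • x} = Submodule.span ℂ {x} := fun x =>
    Submodule.span_singleton_smul_eq (IsUnit.mk0 _ omega3_ne_zero) x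
  rw [show ({omega3 • shiftU, (1:ℂ) • clockV, omega3 • (clockV ^ 2), omega3 • (shiftU ^ 2)} :
      Set (Mat 3)) = insert (omega3 • shiftU) (insert ((1:ℂ) • clockV)
        (insert (omega3 • clockV ^ 2) {omega3 • shiftU ^ 2})) from rfl]
  rw [show ({shiftU, shiftU ^ 2, clockV, clockV ^ 2} : Set (Mat 3)) =
      insert shiftU (insert (shiftU ^ 2) (insert clockV {clockV ^ 2})) from rfl]
  simp only [Submodule.span_insert, hsm, one_smul]
  rw [sup_comm (Submodule.span ℂ {shiftU ^ 2})]
  ac_rfl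

/-! ### Main theorem -/

/-- if a quantum graph `R ≤ M_3(ℂ)` is isomorphic to `VT34`, then so is its
complement. -/
theorem stmt17 (R : Submodule ℂ (Mat 3)) (hQG : IsQuantumGraph R)
    (hiso : Iso R VT34) : Iso (qCompl R) VT34 := by
  obtain ⟨u, hu, hmap⟩ := hiso
  refine ⟨wUnit * u, mul_mem wUnit_mem hu, ?_⟩
  rw [← map_map_conjMap, qCompl_map hu, hmap, qCompl_VT34, S34_map_wUnit]

end QG
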